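/- Let Q ∈ ℝⁿˣⁿ be symmetric and let b, α ∈ ℝⁿ satisfy |b_i| ≤ α_i for all i. Define the index sets I₊ := {i : −b_i = α_i > 0}, I₋ := {i : b_i = α_i > 0}, I_f := {i : b_i = α_i = 0}, and I_{≠0} := I₊ ∪ I₋. Then the homogeneous program minimize ½vᵀQv subject to bᵀv + ∑_i α_i|v_i| ≤ 0 has optimal value zero (equivalently, vᵀQv ≥ 0 for every feasible v) if and only if the following three conditions hold: (i) the principal submatrix Q_{I_f I_f} is positive semidefinite, with eigen-decomposition Pᵀ Q_{I_f I_f} P = Ξ where P is orthogonal and Ξ = diag(Ξ⁺, 0) with Ξ⁺ a diagonal matrix of the positive eigenvalues; write P = [P⁺, P⁰] for the corresponding column blocks; (ii) the matrix [Q_{I₊ I_f}; Q_{I₋ I_f}] · P⁰ = 0; (iii) the Schur complement [[Q_{I₊I₊}, −Q_{I₊I₋}], [−Q_{I₋I₊}, Q_{I₋I₋}]] − [Q_{I₊I_f}P⁺; −Q_{I₋I_f}P⁺] (Ξ⁺)⁻¹ [Q_{I₊I_f}P⁺; −Q_{I₋I_f}P⁺]ᵀ is copositive on the nonnegative orthant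 ℝ₊^{|I_{≠0}|}. -/

import Mathlib

open Filter Topology Set

noncomputable section

open Finset Matrix


lemma aux_split_sum {ι : Type*} [Fintype ι] (p q : ι → Prop) [DecidablePred p] [DecidablePred q]
    (hdisj : ∀ i, p i → q i → False) (f : ι → ℝ)
    (hf : ∀ i, ¬ p i → ¬ q i → f i = 0) :
    ∑ i, f i = (∑ i : {i // p i}, f i.1) + (∑ i : {i // q i}, f i.1) := by
  have h1 : (∑ i : {i // p i}, f i.1) = ∑ i ∈ Finset.univ.filter p, f i :=
    (Finset.sum_subtype _ (by simp) f).symm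
  have h2 : (∑ i : {i // q i}, f i.1) = ∑ i ∈ Finset.univ.filter q, f i :=
    (Finset.sum_subtype _ (by simp) f).symm
  have h3 : ∑ i ∈ Finset.univ.filter q, f i
      = ∑ i ∈ Finset.univ.filter (fun i => ¬ p i), f i := by
    apply Finset.sum_subset
    · intro x hx
      simp only [Finset.mem_filter, Finset.mem_univ, true_and] at hx ⊢
      exact fun hp => hdisj x hp hx
    · intro x hx hq
      simp only [Finset.mem_filter, Finset.mem_univ, true_and] at hx hq
      exact hf x hx hq
  rw [h1, h2, h3, Finset.sum_filter_add_sum_filter_not]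

lemma aux_dp {σ τ : Type*} [Fintype σ] [Fintype τ] (M : Matrix τ σ ℝ) (x : τ → ℝ) (y : σ → ℝ) :
    ∑ i, ∑ j, M i j * x i * y j = x ⬝ᵥ (M *ᵥ y) := by
  simp only [dotProduct, mulVec, Finset.mul_sum]
  exact Finset.sum_congr rfl fun i _ => Finset.sum_congr rfl fun j _ => by ring

lemma aux_quad {σ τ : Type*} [Fintype σ] [Fintype τ] [DecidableEq σ]
    (A : Matrix τ τ ℝ) (R : Matrix τ σ ℝ) (C : Matrix σ σ ℝ)
    (P : Matrix σ σ ℝ) (ξ : σ → ℝ) (hD : Pᵀ * C * P = Matrix.diagonal ξ)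
    (x : τ → ℝ) (z : σ → ℝ) :
    x ⬝ᵥ (A *ᵥ x) + 2 * (x ⬝ᵥ (R *ᵥ (P *ᵥ z))) + (P *ᵥ z) ⬝ᵥ (C *ᵥ (P *ᵥ z))
      = x ⬝ᵥ (A *ᵥ x) + ∑ k, (ξ k * z k ^ 2 + 2 * ((x ᵥ* (R * P)) k) * z k) := by
  have e1 : (P *ᵥ z) ⬝ᵥ (C *ᵥ (P *ᵥ z)) = ∑ k, ξ k * z k ^ 2 := by
    have : z ⬝ᵥ ((Pᵀ * C * P) *ᵥ z) = (P *ᵥ z) ⬝ᵥ (C *ᵥ (P *ᵥ z)) := by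
      rw [mul_assoc, ← Matrix.mulVec_mulVec, Matrix.dotProduct_mulVec,
        Matrix.vecMul_transpose, ← Matrix.mulVec_mulVec]
    rw [← this, hD]
    simp [dotProduct, Matrix.mulVec_diagonal]
    exact Finset.sum_congr rfl fun k _ => by ring
  have e2 : x ⬝ᵥ (R *ᵥ (P *ᵥ z)) = ∑ k, ((x ᵥ* (R * P)) k) * z k := by
    rw [Matrix.mulVec_mulVec, Matrix.dotProduct_mulVec]
    rfl
  rw [e1, e2, Finset.sum_add_distrib, Finset.mul_sum]
  simp only [mul_assoc]
  ring

lemma aux_sq (ξ c z : ℝ) (hξ : 0 ≤ ξ) (hc0 : ξ = 0 → c = 0) :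
    (if 0 < ξ then -(c ^ 2 / ξ) else 0) ≤ ξ * z ^ 2 + 2 * c * z := by
  rcases eq_or_lt_of_le hξ with h0 | hpos
  · rw [if_neg (by rw [← h0]; exact lt_irrefl 0), ← h0, hc0 h0.symm]
    simp
  · rw [if_pos hpos]
    have key : ξ * (ξ * z ^ 2 + 2 * c * z + c ^ 2 / ξ) = (ξ * z + c) ^ 2 := by
      field_simp; ring
    have h2 : 0 ≤ ξ * (ξ * z ^ 2 + 2 * c * z + c ^ 2 / ξ) := key ▸ sq_nonneg _
    nlinarith [(mul_nonneg_iff_of_pos_left hpos).mp h2]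

-- spectral bridge for real symmetric matrices
lemma aux_spectral {σ : Type*} [Fintype σ] [DecidableEq σ] (C : Matrix σ σ ℝ)
    (hC : ∀ i j, C i j = C j i) :
    ∃ (P : Matrix σ σ ℝ) (ξ : σ → ℝ), Pᵀ * P = 1 ∧ Pᵀ * C * P = Matrix.diagonal ξ := by
  have hH : C.IsHermitian := by
    ext i j; simpa [Matrix.conjTranspose_apply] using hC j i
  refine ⟨hH.eigenvectorUnitary, hH.eigenvalues, ?_, ?_⟩
  · have := Matrix.mem_unitaryGroup_iff'.mp hH.eigenvectorUnitary.2
    simpa [Matrix.star_eq_conjTranspose, Matrix.conjTranspose_eq_transpose_of_trivial] using this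
  · have := hH.conjStarAlgAut_star_eigenvectorUnitary
    rw [Unitary.conjStarAlgAut_star_apply] at this
    simp only [Matrix.star_eq_conjTranspose, Matrix.conjTranspose_eq_transpose_of_trivial] at this
    exact this

section Defs
variable {n : ℕ}

def sgn (b α : Fin n → ℝ) (i : {i : Fin n // (-b i = α i ∨ b i = α i) ∧ 0 < α i}) : ℝ :=
  if -b i.1 = α i.1 then 1 else -1

lemma sgn_mul_self (b α : Fin n → ℝ) (i) : sgn b α i * sgn b α i = 1 := by
  unfold sgn; split_ifs <;> norm_num

lemma sgn_ne_zero (b α : Fin n → ℝ) (i) : sgn b α i ≠ 0 := by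
  unfold sgn; split_ifs <;> norm_num

def Vmk (b α : Fin n → ℝ)
    (u : {i : Fin n // (-b i = α i ∨ b i = α i) ∧ 0 < α i} → ℝ)
    (w : {i : Fin n // b i = 0 ∧ α i = 0} → ℝ) : Fin n → ℝ := fun i =>
  if h : (-b i = α i ∨ b i = α i) ∧ 0 < α i then sgn b α ⟨i, h⟩ * u ⟨i, h⟩
  else if h' : b i = 0 ∧ α i = 0 then w ⟨i, h'⟩ else 0

lemma Vmk_T (b α : Fin n → ℝ) (u w) (i : Fin n) (hi : (-b i = α i ∨ b i = α i) ∧ 0 < α i) :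
    Vmk b α u w i = sgn b α ⟨i, hi⟩ * u ⟨i, hi⟩ := dif_pos hi

lemma Vmk_S (b α : Fin n → ℝ) (u w) (i : Fin n) (hi : b i = 0 ∧ α i = 0) :
    Vmk b α u w i = w ⟨i, hi⟩ := by
  rw [Vmk, dif_neg (by rintro ⟨-, h2⟩; rw [hi.2] at h2; exact lt_irrefl 0 h2), dif_pos hi]

lemma Vmk_0 (b α : Fin n → ℝ) (u w) (i : Fin n)
    (h1 : ¬ ((-b i = α i ∨ b i = α i) ∧ 0 < α i)) (h2 : ¬ (b i = 0 ∧ α i = 0)) :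
    Vmk b α u w i = 0 := by rw [Vmk, dif_neg h1, dif_neg h2]

end Defs

section Feas
variable {n : ℕ} {b α : Fin n → ℝ}

lemma feas_terms (h : ∀ i, |b i| ≤ α i) (v : Fin n → ℝ)
    (hv : (∑ i, b i * v i) + (∑ i, α i * |v i|) ≤ 0) :
    ∀ i, b i * v i + α i * |v i| = 0 := by
  have hnn : ∀ j ∈ Finset.univ, (0:ℝ) ≤ b j * v j + α j * |v j| := by
    intro j _
    have h1 : |b j * v j| ≤ α j * |v j| := by
      rw [abs_mul]; exact mul_le_mul_of_nonneg_right (h j) (abs_nonneg _)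
    have h2 := neg_abs_le (b j * v j)
    linarith
  have hsum : ∑ j, (b j * v j + α j * |v j|) ≤ 0 := by
    rw [Finset.sum_add_distrib]; exact hv
  have := (Finset.sum_eq_zero_iff_of_nonneg hnn).mp
    (le_antisymm hsum (Finset.sum_nonneg hnn))
  exact fun i => this i (Finset.mem_univ i)

lemma feas_zero (h : ∀ i, |b i| ≤ α i) (v : Fin n → ℝ)
    (hv : (∑ i, b i * v i) + (∑ i, α i * |v i|) ≤ 0) (i : Fin n)
    (h1 : ¬ ((-b i = α i ∨ b i = α i) ∧ 0 < α i)) (h2 : ¬ (b i = 0 ∧ α i = 0)) :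
    v i = 0 := by
  have ht := feas_terms h v hv i
  have hα0 : 0 ≤ α i := le_trans (abs_nonneg _) (h i)
  rcases eq_or_lt_of_le hα0 with h0 | hpos
  · exfalso
    have hb : b i = 0 := by have := h i; rw [← h0] at this; exact abs_eq_zero.mp (le_antisymm this (abs_nonneg _))
    exact h2 ⟨hb, h0.symm⟩
  · have hne : ¬ (-b i = α i ∨ b i = α i) := fun hc => h1 ⟨hc, hpos⟩
    push_neg at hne
    have habs : |b i| < α i := by
      refine lt_of_le_of_ne (h i) ?_
      intro he
      rcases (abs_eq hα0).mp he with h' | h'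
      · exact hne.2 h'
      · exact hne.1 (by rw [h']; ring)
    have hb1 : b i * v i ≥ -(|b i| * |v i|) := by
      have := neg_abs_le (b i * v i); rw [abs_mul] at this; linarith
    have : (α i - |b i|) * |v i| ≤ 0 := by nlinarith
    have hv0 : |v i| ≤ 0 := by
      by_contra hcon
      push_neg at hcon
      nlinarith
    exact abs_eq_zero.mp (le_antisymm hv0 (abs_nonneg _))

lemma feas_sign (h : ∀ i, |b i| ≤ α i) (v : Fin n → ℝ)
    (hv : (∑ i, b i * v i) + (∑ i, α i * |v i|) ≤ 0) (i : Fin n)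
    (hi : (-b i = α i ∨ b i = α i) ∧ 0 < α i) :
    0 ≤ sgn b α ⟨i, hi⟩ * v i := by
  have ht := feas_terms h v hv i
  unfold sgn
  simp only
  split_ifs with hcase
  · -- -b i = α i : b i = -α i, term: α(|v|-v)=0, v ≥ 0
    have hb : b i = -α i := by linarith
    rw [hb] at ht
    by_contra hc
    push_neg at hc
    have hv' : v i < 0 := by linarith
    nlinarith [mul_pos hi.2 (neg_pos.mpr hv'), mul_nonneg (le_of_lt hi.2) (abs_nonneg (v i))]
  · have hb : b i = α i := hi.1.resolve_left hcase
    rw [hb] at ht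
    by_contra hc
    push_neg at hc
    have hv' : 0 < v i := by nlinarith
    nlinarith [mul_pos hi.2 hv', mul_nonneg (le_of_lt hi.2) (abs_nonneg (v i))]

lemma feas_Vmk (h : ∀ i, |b i| ≤ α i)
    (u : {i : Fin n // (-b i = α i ∨ b i = α i) ∧ 0 < α i} → ℝ) (hu : ∀ i, 0 ≤ u i)
    (w : {i : Fin n // b i = 0 ∧ α i = 0} → ℝ) :
    (∑ i, b i * Vmk b α u w i) + (∑ i, α i * |Vmk b α u w i|) ≤ 0 := by
  have : ∀ i, b i * Vmk b α u w i + α i * |Vmk b α u w i| = 0 := by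
    intro i
    by_cases hT : (-b i = α i ∨ b i = α i) ∧ 0 < α i
    · rw [Vmk_T b α u w i hT]
      unfold sgn
      simp only
      split_ifs with hcase
      · have hb : b i = -α i := by linarith
        rw [hb, one_mul, abs_of_nonneg (hu ⟨i, hT⟩)]
        ring
      · have hb : b i = α i := hT.1.resolve_left hcase
        rw [hb, neg_one_mul, abs_neg, abs_of_nonneg (hu ⟨i, hT⟩)]
        ring
    · by_cases hS : b i = 0 ∧ α i = 0
      · rw [hS.1, hS.2]; ring
      · rw [Vmk_0 b α u w i hT hS]; simp
  have hsum : ∑ i, (b i * Vmk b α u w i + α i * |Vmk b α u w i|) = 0 :=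
    Finset.sum_eq_zero fun i _ => this i
  rw [Finset.sum_add_distrib] at hsum
  linarith

end Feas

section Qval
variable {n : ℕ}

lemma qval (Q : Matrix (Fin n) (Fin n) ℝ) (hQ : ∀ i j, Q i j = Q j i) (b α : Fin n → ℝ)
    (u : {i : Fin n // (-b i = α i ∨ b i = α i) ∧ 0 < α i} → ℝ)
    (w : {i : Fin n // b i = 0 ∧ α i = 0} → ℝ) :
    ∑ i, ∑ j, Q i j * Vmk b α u w i * Vmk b α u w j
      = (fun i => sgn b α i * u i) ⬝ᵥ
          ((Matrix.of fun i j : {i : Fin n // (-b i = α i ∨ b i = α i) ∧ 0 < α i} => Q i.1 j.1)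
            *ᵥ (fun i => sgn b α i * u i))
        + 2 * ((fun i => sgn b α i * u i) ⬝ᵥ
            ((Matrix.of fun (i : {i : Fin n // (-b i = α i ∨ b i = α i) ∧ 0 < α i})
                (j : {i : Fin n // b i = 0 ∧ α i = 0}) => Q i.1 j.1) *ᵥ w))
        + w ⬝ᵥ ((Matrix.of fun i j : {i : Fin n // b i = 0 ∧ α i = 0} => Q i.1 j.1) *ᵥ w) := by
  set v := Vmk b α u w with hv
  set x : {i : Fin n // (-b i = α i ∨ b i = α i) ∧ 0 < α i} → ℝ := fun i => sgn b α i * u i with hx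
  have hdisj : ∀ i : Fin n, ((-b i = α i ∨ b i = α i) ∧ 0 < α i) → (b i = 0 ∧ α i = 0) → False :=
    fun i h1 h2 => by rw [h2.2] at h1; exact lt_irrefl 0 h1.2
  have hv0 : ∀ i, ¬ ((-b i = α i ∨ b i = α i) ∧ 0 < α i) → ¬ (b i = 0 ∧ α i = 0) → v i = 0 :=
    fun i h1 h2 => Vmk_0 b α u w i h1 h2
  have hsplit : ∀ g : Fin n → ℝ, (∀ i, ¬ ((-b i = α i ∨ b i = α i) ∧ 0 < α i)
      → ¬ (b i = 0 ∧ α i = 0) → g i = 0) →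
      ∑ i, g i = (∑ i : {i : Fin n // (-b i = α i ∨ b i = α i) ∧ 0 < α i}, g i.1)
        + (∑ i : {i : Fin n // b i = 0 ∧ α i = 0}, g i.1) :=
    fun g hg => aux_split_sum _ _ hdisj g hg
  have houter : ∑ i, ∑ j, Q i j * v i * v j
      = (∑ i : {i : Fin n // (-b i = α i ∨ b i = α i) ∧ 0 < α i}, ∑ j, Q i.1 j * v i.1 * v j)
        + (∑ i : {i : Fin n // b i = 0 ∧ α i = 0}, ∑ j, Q i.1 j * v i.1 * v j) := by
    refine hsplit _ fun i h1 h2 => ?_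
    simp [hv0 i h1 h2]
  have hinner : ∀ f : Fin n → ℝ, ∑ j, f j * v j
      = (∑ j : {i : Fin n // (-b i = α i ∨ b i = α i) ∧ 0 < α i}, f j.1 * v j.1)
        + (∑ j : {i : Fin n // b i = 0 ∧ α i = 0}, f j.1 * v j.1) := by
    intro f
    refine hsplit _ fun j h1 h2 => ?_
    rw [hv0 j h1 h2, mul_zero]
  have hQvv : ∀ (i j : Fin n), Q i j * v i * v j = (fun j => Q i j * v i) j * v j :=
    fun i j => rfl
  rw [houter]
  have hT : (∑ i : {i : Fin n // (-b i = α i ∨ b i = α i) ∧ 0 < α i}, ∑ j, Q i.1 j * v i.1 * v j)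
      = (∑ i : {i : Fin n // (-b i = α i ∨ b i = α i) ∧ 0 < α i},
          ((∑ j : {i : Fin n // (-b i = α i ∨ b i = α i) ∧ 0 < α i}, Q i.1 j.1 * v i.1 * v j.1)
           + (∑ j : {i : Fin n // b i = 0 ∧ α i = 0}, Q i.1 j.1 * v i.1 * v j.1))) :=
    Finset.sum_congr rfl fun i _ => hinner (fun j => Q i.1 j * v i.1)
  have hS : (∑ i : {i : Fin n // b i = 0 ∧ α i = 0}, ∑ j, Q i.1 j * v i.1 * v j)
      = (∑ i : {i : Fin n // b i = 0 ∧ α i = 0},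
          ((∑ j : {i : Fin n // (-b i = α i ∨ b i = α i) ∧ 0 < α i}, Q i.1 j.1 * v i.1 * v j.1)
           + (∑ j : {i : Fin n // b i = 0 ∧ α i = 0}, Q i.1 j.1 * v i.1 * v j.1))) :=
    Finset.sum_congr rfl fun i _ => hinner (fun j => Q i.1 j * v i.1)
  rw [hT, hS, Finset.sum_add_distrib, Finset.sum_add_distrib]
  -- now four blocks
  have hvT : ∀ i : {i : Fin n // (-b i = α i ∨ b i = α i) ∧ 0 < α i}, v i.1 = x i := by
    intro i; rw [hv, Vmk_T b α u w i.1 i.2]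
  have hvS : ∀ i : {i : Fin n // b i = 0 ∧ α i = 0}, v i.1 = w i := by
    intro i; rw [hv, Vmk_S b α u w i.1 i.2]
  have bTT : (∑ i : {i : Fin n // (-b i = α i ∨ b i = α i) ∧ 0 < α i},
        ∑ j : {i : Fin n // (-b i = α i ∨ b i = α i) ∧ 0 < α i}, Q i.1 j.1 * v i.1 * v j.1)
      = x ⬝ᵥ ((Matrix.of fun i j : {i : Fin n // (-b i = α i ∨ b i = α i) ∧ 0 < α i} => Q i.1 j.1) *ᵥ x) := by
    rw [← aux_dp]
    exact Finset.sum_congr rfl fun i _ => Finset.sum_congr rfl fun j _ => by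
      simp only [hvT, Matrix.of_apply]
  have bTS : (∑ i : {i : Fin n // (-b i = α i ∨ b i = α i) ∧ 0 < α i},
        ∑ j : {i : Fin n // b i = 0 ∧ α i = 0}, Q i.1 j.1 * v i.1 * v j.1)
      = x ⬝ᵥ ((Matrix.of fun (i : {i : Fin n // (-b i = α i ∨ b i = α i) ∧ 0 < α i})
          (j : {i : Fin n // b i = 0 ∧ α i = 0}) => Q i.1 j.1) *ᵥ w) := by
    rw [← aux_dp]
    exact Finset.sum_congr rfl fun i _ => Finset.sum_congr rfl fun j _ => by
      simp only [hvT, hvS, Matrix.of_apply]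
  have bST : (∑ i : {i : Fin n // b i = 0 ∧ α i = 0},
        ∑ j : {i : Fin n // (-b i = α i ∨ b i = α i) ∧ 0 < α i}, Q i.1 j.1 * v i.1 * v j.1)
      = x ⬝ᵥ ((Matrix.of fun (i : {i : Fin n // (-b i = α i ∨ b i = α i) ∧ 0 < α i})
          (j : {i : Fin n // b i = 0 ∧ α i = 0}) => Q i.1 j.1) *ᵥ w) := by
    rw [← aux_dp, Finset.sum_comm]
    refine Finset.sum_congr rfl fun i _ => Finset.sum_congr rfl fun j _ => ?_
    simp only [hvT, hvS, Matrix.of_apply]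
    rw [hQ j.1 i.1]
    ring
  have bSS : (∑ i : {i : Fin n // b i = 0 ∧ α i = 0},
        ∑ j : {i : Fin n // b i = 0 ∧ α i = 0}, Q i.1 j.1 * v i.1 * v j.1)
      = w ⬝ᵥ ((Matrix.of fun i j : {i : Fin n // b i = 0 ∧ α i = 0} => Q i.1 j.1) *ᵥ w) := by
    rw [← aux_dp]
    exact Finset.sum_congr rfl fun i _ => Finset.sum_congr rfl fun j _ => by
      simp only [hvS, Matrix.of_apply]
  rw [bTT, bTS, bST, bSS]
  ring

end Qval

section Schur
variable {n : ℕ}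

lemma schur_eq (Q : Matrix (Fin n) (Fin n) ℝ) (b α : Fin n → ℝ)
    (P : Matrix {i : Fin n // b i = 0 ∧ α i = 0} {i : Fin n // b i = 0 ∧ α i = 0} ℝ)
    (ξ : {i : Fin n // b i = 0 ∧ α i = 0} → ℝ)
    (u : {i : Fin n // (-b i = α i ∨ b i = α i) ∧ 0 < α i} → ℝ) :
    (∑ i, ∑ j, u i * u j *
          ((if -b i.1 = α i.1 then (1:ℝ) else -1) * (if -b j.1 = α j.1 then (1:ℝ) else -1)
              * Q i.1 j.1 -
           ∑ k, if 0 < ξ k then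
              ((if -b i.1 = α i.1 then (1:ℝ) else -1) * (∑ a, Q i.1 a.1 * P a k)) *
              ((if -b j.1 = α j.1 then (1:ℝ) else -1) * (∑ a, Q j.1 a.1 * P a k)) / ξ k
            else 0))
      = (fun i => sgn b α i * u i) ⬝ᵥ
          ((Matrix.of fun i j : {i : Fin n // (-b i = α i ∨ b i = α i) ∧ 0 < α i} => Q i.1 j.1)
            *ᵥ (fun i => sgn b α i * u i))
        - ∑ k, (if 0 < ξ k then
            (((fun i => sgn b α i * u i) ᵥ*
              ((Matrix.of fun (i : {i : Fin n // (-b i = α i ∨ b i = α i) ∧ 0 < α i})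
                  (j : {i : Fin n // b i = 0 ∧ α i = 0}) => Q i.1 j.1) * P)) k) ^ 2 / ξ k
          else 0) := by
  set x : {i : Fin n // (-b i = α i ∨ b i = α i) ∧ 0 < α i} → ℝ := fun i => sgn b α i * u i
    with hx
  set R : Matrix {i : Fin n // (-b i = α i ∨ b i = α i) ∧ 0 < α i}
      {i : Fin n // b i = 0 ∧ α i = 0} ℝ :=
    Matrix.of (fun (i : {i : Fin n // (-b i = α i ∨ b i = α i) ∧ 0 < α i})
                  (j : {i : Fin n // b i = 0 ∧ α i = 0}) => Q i.1 j.1) with hR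
  have hsgn : ∀ i : {i : Fin n // (-b i = α i ∨ b i = α i) ∧ 0 < α i},
      (if -b i.1 = α i.1 then (1:ℝ) else -1) = sgn b α i := fun i => rfl
  have hRP : ∀ (i : {i : Fin n // (-b i = α i ∨ b i = α i) ∧ 0 < α i}) k,
      (∑ a, Q i.1 a.1 * P a k) = (R * P) i k := by
    intro i k; rw [Matrix.mul_apply]; rfl
  -- split difference
  have step1 : ∀ (i j : {i : Fin n // (-b i = α i ∨ b i = α i) ∧ 0 < α i}),
      u i * u j *
          ((if -b i.1 = α i.1 then (1:ℝ) else -1) * (if -b j.1 = α j.1 then (1:ℝ) else -1)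
              * Q i.1 j.1 -
           ∑ k, if 0 < ξ k then
              ((if -b i.1 = α i.1 then (1:ℝ) else -1) * (∑ a, Q i.1 a.1 * P a k)) *
              ((if -b j.1 = α j.1 then (1:ℝ) else -1) * (∑ a, Q j.1 a.1 * P a k)) / ξ k
            else 0)
      = Q i.1 j.1 * x i * x j
        - ∑ k, (if 0 < ξ k then (x i * (R * P) i k) * (x j * (R * P) j k) / ξ k else 0) := by
    intro i j
    rw [mul_sub]
    congr 1
    · rw [hsgn i, hsgn j, hx]; ring
    · rw [Finset.mul_sum]
      refine Finset.sum_congr rfl fun k _ => ?_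
      rw [hsgn i, hsgn j, hRP i, hRP j, mul_ite, mul_zero]
      split_ifs with hk
      · rw [hx]; ring
      · rfl
  calc (∑ i, ∑ j, u i * u j *
          ((if -b i.1 = α i.1 then (1:ℝ) else -1) * (if -b j.1 = α j.1 then (1:ℝ) else -1)
              * Q i.1 j.1 -
           ∑ k, if 0 < ξ k then
              ((if -b i.1 = α i.1 then (1:ℝ) else -1) * (∑ a, Q i.1 a.1 * P a k)) *
              ((if -b j.1 = α j.1 then (1:ℝ) else -1) * (∑ a, Q j.1 a.1 * P a k)) / ξ k
            else 0))
      = ∑ i, ∑ j, (Q i.1 j.1 * x i * x j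
          - ∑ k, (if 0 < ξ k then (x i * (R * P) i k) * (x j * (R * P) j k) / ξ k else 0)) := by
        exact Finset.sum_congr rfl fun i _ => Finset.sum_congr rfl fun j _ => step1 i j
    _ = (∑ i, ∑ j, Q i.1 j.1 * x i * x j)
        - ∑ i, ∑ j, ∑ k, (if 0 < ξ k then (x i * (R * P) i k) * (x j * (R * P) j k) / ξ k
            else 0) := by
        rw [← Finset.sum_sub_distrib]
        exact Finset.sum_congr rfl fun i _ => by rw [← Finset.sum_sub_distrib]
    _ = x ⬝ᵥ ((Matrix.of fun i j : {i : Fin n // (-b i = α i ∨ b i = α i) ∧ 0 < α i} => Q i.1 j.1)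
            *ᵥ x)
        - ∑ k, (if 0 < ξ k then ((x ᵥ* (R * P)) k) ^ 2 / ξ k else 0) := by
        congr 1
        · rw [← aux_dp]
          exact Finset.sum_congr rfl fun i _ => Finset.sum_congr rfl fun j _ => rfl
        · have hswap : (∑ i, ∑ j, ∑ k,
              (if 0 < ξ k then (x i * (R * P) i k) * (x j * (R * P) j k) / ξ k else 0))
              = ∑ k, ∑ i, ∑ j,
              (if 0 < ξ k then (x i * (R * P) i k) * (x j * (R * P) j k) / ξ k else 0) :=
            calc (∑ i, ∑ j, ∑ k,
                (if 0 < ξ k then (x i * (R * P) i k) * (x j * (R * P) j k) / ξ k else 0))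
                = ∑ i, ∑ k, ∑ j,
                  (if 0 < ξ k then (x i * (R * P) i k) * (x j * (R * P) j k) / ξ k else 0) :=
                Finset.sum_congr rfl fun i _ => Finset.sum_comm
              _ = ∑ k, ∑ i, ∑ j,
                  (if 0 < ξ k then (x i * (R * P) i k) * (x j * (R * P) j k) / ξ k else 0) :=
                Finset.sum_comm
          rw [hswap]
          refine Finset.sum_congr rfl fun k _ => ?_
          split_ifs with hk
          · have hv : (x ᵥ* (R * P)) k = ∑ i, x i * (R * P) i k := rfl
            rw [hv, sq, Finset.sum_mul_sum, Finset.sum_div]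
            refine Finset.sum_congr rfl fun i _ => ?_
            rw [Finset.sum_div]
          · simp

end Schur



/-- Under `|bᵢ| ≤ αᵢ`, with index sets `I₊ = {i : −bᵢ = αᵢ > 0}`,
`I₋ = {i : bᵢ = αᵢ > 0}`, `I_f = {i : bᵢ = αᵢ = 0}`, the homogeneous program
`min ½vᵀQv  s.t.  bᵀv + ∑ αᵢ|vᵢ| ≤ 0` has optimal value zero (i.e. `vᵀQv ≥ 0` for all
feasible `v`) iff: (i) `Q_{I_f I_f}` is PSD with orthogonal eigen-decomposition
`Pᵀ Q_{I_f I_f} P = diag ξ`, `ξ ≥ 0`; (ii) the rows `Q_{i I_f}` (`i ∈ I₊ ∪ I₋`)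
annihilate the zero-eigenvalue columns `P⁰`; and (iii) the corresponding Schur complement
is copositive on the nonnegative orthant indexed by `I₊ ∪ I₋` (with the sign pattern
`+` on `I₊` and `−` on `I₋`). -/
theorem stmt19 {n : ℕ} (Q : Matrix (Fin n) (Fin n) ℝ) (hQ : ∀ i j, Q i j = Q j i)
    (b α : Fin n → ℝ) (h : ∀ i, |b i| ≤ α i) :
    (∀ v : Fin n → ℝ,
        (∑ i, b i * v i) + (∑ i, α i * |v i|) ≤ 0 →
        0 ≤ ∑ i, ∑ j, Q i j * v i * v j) ↔
    (∃ (P : Matrix {i : Fin n // b i = 0 ∧ α i = 0} {i : Fin n // b i = 0 ∧ α i = 0} ℝ)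
       (ξ : {i : Fin n // b i = 0 ∧ α i = 0} → ℝ),
      -- P is orthogonal
      P.transpose * P = 1 ∧
      -- eigen-decomposition of the principal submatrix Q_{I_f I_f}
      P.transpose * (Matrix.of
          fun i j : {i : Fin n // b i = 0 ∧ α i = 0} => Q i.1 j.1) * P
        = Matrix.diagonal ξ ∧
      -- (i) positive semidefiniteness: all eigenvalues are nonnegative
      (∀ k, 0 ≤ ξ k) ∧
      -- (ii) [Q_{I₊ I_f}; Q_{I₋ I_f}] · P⁰ = 0
      (∀ i : Fin n, ((-b i = α i ∨ b i = α i) ∧ 0 < α i) →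
        ∀ k, ξ k = 0 → (∑ a, Q i a.1 * P a k) = 0) ∧
      -- (iii) the Schur complement is copositive on the nonnegative orthant
      (∀ u : {i : Fin n // (-b i = α i ∨ b i = α i) ∧ 0 < α i} → ℝ,
        (∀ i, 0 ≤ u i) →
        0 ≤ ∑ i, ∑ j, u i * u j *
          ((if -b i.1 = α i.1 then (1:ℝ) else -1) * (if -b j.1 = α j.1 then (1:ℝ) else -1)
              * Q i.1 j.1 -
           ∑ k, if 0 < ξ k then
              ((if -b i.1 = α i.1 then (1:ℝ) else -1) * (∑ a, Q i.1 a.1 * P a k)) *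
              ((if -b j.1 = α j.1 then (1:ℝ) else -1) * (∑ a, Q j.1 a.1 * P a k)) / ξ k
            else 0))) := by
  set A := Matrix.of (fun i j : {i : Fin n // (-b i = α i ∨ b i = α i) ∧ 0 < α i} => Q i.1 j.1)
    with hA
  set R := Matrix.of (fun (i : {i : Fin n // (-b i = α i ∨ b i = α i) ∧ 0 < α i})
      (j : {i : Fin n // b i = 0 ∧ α i = 0}) => Q i.1 j.1) with hRdef
  set C := Matrix.of (fun i j : {i : Fin n // b i = 0 ∧ α i = 0} => Q i.1 j.1) with hCdef
  constructor
  · intro hL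
    obtain ⟨P, ξ, hP1, hPD⟩ := aux_spectral C (fun i j => hQ i.1 j.1)
    have hval : ∀ (u : {i : Fin n // (-b i = α i ∨ b i = α i) ∧ 0 < α i} → ℝ),
        (∀ i, 0 ≤ u i) → ∀ (z : {i : Fin n // b i = 0 ∧ α i = 0} → ℝ),
        0 ≤ (fun i => sgn b α i * u i) ⬝ᵥ (A *ᵥ (fun i => sgn b α i * u i))
          + ∑ k, (ξ k * z k ^ 2 + 2 * (((fun i => sgn b α i * u i) ᵥ* (R * P)) k) * z k) := by
      intro u hu z
      have h0 := hL (Vmk b α u (P *ᵥ z)) (feas_Vmk h u hu (P *ᵥ z))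
      rw [qval Q hQ b α u (P *ᵥ z)] at h0
      rw [aux_quad A R C P ξ hPD (fun i => sgn b α i * u i) z] at h0
      exact h0
    have hξ : ∀ k, 0 ≤ ξ k := by
      intro k
      have h0 := hval 0 (fun _ => le_refl 0) (Pi.single k 1)
      have hx0 : (fun i => sgn b α i * (0 : {i : Fin n // (-b i = α i ∨ b i = α i) ∧ 0 < α i} → ℝ) i)
          = (0 : {i : Fin n // (-b i = α i ∨ b i = α i) ∧ 0 < α i} → ℝ) := by
        funext i; simp
      rw [hx0] at h0
      simpa [Pi.single_apply, Finset.sum_ite_eq'] using h0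
    refine ⟨P, ξ, hP1, hPD, hξ, ?_, ?_⟩
    · -- (ii)
      intro i0 hi0 k hk
      by_contra hr0
      set iT : {i : Fin n // (-b i = α i ∨ b i = α i) ∧ 0 < α i} := ⟨i0, hi0⟩ with hiT
      have hr : (∑ a, Q i0 a.1 * P a k) = (R * P) iT k := by
        rw [Matrix.mul_apply]; rfl
      set s0 := sgn b α iT with hs0
      set c := s0 * (R * P) iT k with hc
      have hrne : (R * P) iT k ≠ 0 := by rw [← hr]; exact hr0
      have hc0 : c ≠ 0 := mul_ne_zero (sgn_ne_zero _ _ _) hrne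
      set t : ℝ := -(Q i0 i0 + 1) / (2 * c) with ht
      have h0 := hval (Pi.single iT (1:ℝ)) (fun i => by
        rcases eq_or_ne i iT with rfl | hne
        · simp
        · simp [Pi.single_apply, hne]) (fun k' => if k' = k then t else 0)
      have hxs : (fun i => sgn b α i *
          (Pi.single iT (1:ℝ) : {i : Fin n // (-b i = α i ∨ b i = α i) ∧ 0 < α i} → ℝ) i)
          = (Pi.single iT s0 : {i : Fin n // (-b i = α i ∨ b i = α i) ∧ 0 < α i} → ℝ) := by
        funext i
        rcases eq_or_ne i iT with rfl | hne
        · simp [hs0]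
        · simp [Pi.single_apply, hne]
      rw [hxs] at h0
      have e1 : Pi.single iT s0 ⬝ᵥ (A *ᵥ Pi.single iT s0) = Q i0 i0 := by
        rw [Matrix.mulVec_single, _root_.single_dotProduct]
        show s0 * (A iT iT * s0) = Q i0 i0
        have h2 : s0 * s0 = 1 := sgn_mul_self b α iT
        have h3 : A iT iT = Q i0 i0 := rfl
        rw [h3]
        linear_combination Q i0 i0 * h2
      have e2 : (Pi.single iT s0 ᵥ* (R * P)) k = c := by
        rw [Matrix.single_vecMul]
        rfl
      rw [e1] at h0
      have e3 : ∑ k', (ξ k' * (if k' = k then t else 0) ^ 2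
          + 2 * ((Pi.single iT s0 ᵥ* (R * P)) k') * (if k' = k then t else 0))
          = 2 * c * t := by
        rw [Finset.sum_eq_single k]
        · rw [if_pos rfl, hk, e2]; ring
        · intro k' _ hne; rw [if_neg hne]; ring
        · intro hmem; exact absurd (Finset.mem_univ k) hmem
      rw [e3] at h0
      rw [ht] at h0
      have : 2 * c * (-(Q i0 i0 + 1) / (2 * c)) = -(Q i0 i0 + 1) := by
        field_simp
      rw [this] at h0
      linarith
    · -- (iii)
      intro u hu
      set x : {i : Fin n // (-b i = α i ∨ b i = α i) ∧ 0 < α i} → ℝ :=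
        fun i => sgn b α i * u i with hx
      set c : {i : Fin n // b i = 0 ∧ α i = 0} → ℝ := x ᵥ* (R * P) with hcd
      set z : {i : Fin n // b i = 0 ∧ α i = 0} → ℝ :=
        fun k => if 0 < ξ k then -(c k) / ξ k else 0 with hzd
      have h0 := hval u hu z
      have e4 : ∑ k, (ξ k * z k ^ 2 + 2 * (c k) * z k)
          = ∑ k, (if 0 < ξ k then -((c k) ^ 2 / ξ k) else 0) := by
        refine Finset.sum_congr rfl fun k _ => ?_
        rw [hzd]
        simp only
        split_ifs with hkk
        · field_simp
          ring
        · ring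
      rw [e4] at h0
      rw [schur_eq Q b α P ξ u]
      have e5 : ∑ k, (if 0 < ξ k then -((c k) ^ 2 / ξ k) else 0)
          = - ∑ k, (if 0 < ξ k then ((c k) ^ 2 / ξ k) else 0) := by
        rw [← Finset.sum_neg_distrib]
        exact Finset.sum_congr rfl fun k _ => by split_ifs <;> simp
      rw [e5] at h0
      rw [sub_eq_add_neg]
      exact le_trans h0 (le_of_eq rfl)
  · rintro ⟨P, ξ, hP1, hPD, hξ, hann, hcop⟩ v hv
    set u : {i : Fin n // (-b i = α i ∨ b i = α i) ∧ 0 < α i} → ℝ :=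
      fun i => sgn b α i * v i.1 with hud
    set w : {i : Fin n // b i = 0 ∧ α i = 0} → ℝ := fun i => v i.1 with hwd
    have hunn : ∀ i, 0 ≤ u i := fun i => feas_sign h v hv i.1 i.2
    have hveq : v = Vmk b α u w := by
      funext i
      by_cases hT : (-b i = α i ∨ b i = α i) ∧ 0 < α i
      · rw [Vmk_T b α u w i hT, hud]
        simp only
        rw [← mul_assoc, sgn_mul_self, one_mul]
      · by_cases hS : b i = 0 ∧ α i = 0
        · rw [Vmk_S b α u w i hS]
        · rw [Vmk_0 b α u w i hT hS]
          exact feas_zero h v hv i hT hS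
    have hPPt : P * Pᵀ = 1 := mul_eq_one_comm.mp hP1
    set z := Pᵀ *ᵥ w with hzd
    have hwz : w = P *ᵥ z := by
      rw [hzd, Matrix.mulVec_mulVec, hPPt, Matrix.one_mulVec]
    rw [hveq, qval Q hQ b α u w, hwz,
      aux_quad A R C P ξ hPD (fun i => sgn b α i * u i) z]
    set x : {i : Fin n // (-b i = α i ∨ b i = α i) ∧ 0 < α i} → ℝ :=
      fun i => sgn b α i * u i with hx
    set c : {i : Fin n // b i = 0 ∧ α i = 0} → ℝ := x ᵥ* (R * P) with hcd
    have hc0 : ∀ k, ξ k = 0 → c k = 0 := by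
      intro k hk
      have hall : ∀ i : {i : Fin n // (-b i = α i ∨ b i = α i) ∧ 0 < α i}, (R * P) i k = 0 := by
        intro i
        rw [Matrix.mul_apply]
        exact hann i.1 i.2 k hk
      rw [hcd]
      show ∑ i, x i * (R * P) i k = 0
      exact Finset.sum_eq_zero fun i _ => by rw [hall i, mul_zero]
    have hbound : ∀ k ∈ Finset.univ, (if 0 < ξ k then -((c k) ^ 2 / ξ k) else 0)
        ≤ ξ k * z k ^ 2 + 2 * (c k) * z k := fun k _ => aux_sq (ξ k) (c k) (z k) (hξ k) (hc0 k)
    have h3 := Finset.sum_le_sum hbound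
    have h1 := hcop u hunn
    rw [schur_eq Q b α P ξ u] at h1
    have h2 : ∑ k, (if 0 < ξ k then -((c k) ^ 2 / ξ k) else 0)
        = - ∑ k, (if 0 < ξ k then ((c k) ^ 2 / ξ k) else 0) := by
      rw [← Finset.sum_neg_distrib]
      exact Finset.sum_congr rfl fun k _ => by split_ifs <;> simp
    rw [h2] at h3
    linarith
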